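/- arXiv:math/0610702 — 2 statements merged into one kernel-verified Lean document; each statement's English description precedes it below -/
import Mathlib

section
/- Let (Γ,M) be an E-GCM graph with quasi-standard root system Φ_M, and let (Γ',M') be an OA-connected component with node set J. The following are equivalent: (1) (Γ',M') is unital OA-cyclic; (2) the set of positive roots that are scalar multiples of α_x is finite for some x ∈ J; (3) this set is finite for every x ∈ J. Moreover in that case the sets ℝα_x ∩ Φ_M+ have the same cardinality for all x ∈ J. -/
open Real

/-- The quasi-standard reflection `s_i` as a linear endomorphism of `V = ℝⁿ` with basis of
simple roots `α_j = Pi.single j 1`: `s_i(v) = v − 2B(α_i,v)α_i` where `B(α_i,α_j) = M_ij/2`. -/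
noncomputable def reflLin {n : ℕ} (M : Matrix (Fin n) (Fin n) ℝ) (i : Fin n) :
    Module.End ℝ (Fin n → ℝ) where
  toFun v := v - (∑ j, M i j * v j) • (Pi.single i 1 : Fin n → ℝ)
  map_add' v w := by
    ext t
    simp only [Pi.add_apply, Pi.sub_apply, Pi.smul_apply, smul_eq_mul, mul_add,
      Finset.sum_add_distrib]
    ring
  map_smul' c v := by
    ext t
    simp only [Pi.smul_apply, Pi.sub_apply, smul_eq_mul, RingHom.id_apply]
    rw [show (∑ j, M i j * (c * v j)) = c * ∑ j, M i j * v j from by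
      rw [Finset.mul_sum]; exact Finset.sum_congr rfl fun j _ => by ring]
    ring

/-- `M` is an E-generalized Cartan matrix whose amplitude products correspond to the
Coxeter matrix `K` (where `K i j = 0` encodes `m_ij = ∞`). -/
def IsEGCM {n : ℕ} (M : Matrix (Fin n) (Fin n) ℝ) (K : CoxeterMatrix (Fin n)) : Prop :=
  (∀ i, M i i = 2) ∧ (∀ i j, i ≠ j → M i j ≤ 0) ∧ (∀ i j, M i j = 0 ↔ M j i = 0) ∧
  (∀ i j, i ≠ j →
    (K i j = 0 ∧ 4 ≤ M i j * M j i) ∨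
    (2 ≤ K i j ∧ M i j * M j i = 4 * Real.cos (π / (K i j : ℝ)) ^ 2))

/-- The root system `Φ_M = {w·α_i}` of the quasi-standard geometric representation,
where the representation is given by `ρ`. -/
def Phi {n : ℕ} {W : Type*} [Group W] (ρ : W →* Module.End ℝ (Fin n → ℝ)) :
    Set (Fin n → ℝ) :=
  {v | ∃ (w : W) (i : Fin n), v = ρ w (Pi.single i 1)}

/-- The positive roots: roots that are nonnegative combinations of the simple roots. -/
def PhiPlus {n : ℕ} {W : Type*} [Group W] (ρ : W →* Module.End ℝ (Fin n → ℝ)) :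
    Set (Fin n → ℝ) :=
  {v | v ∈ Phi ρ ∧ ∀ j, 0 ≤ v j}

/-- The negative roots: roots that are nonpositive combinations of the simple roots. -/
def PhiMinus {n : ℕ} {W : Type*} [Group W] (ρ : W →* Module.End ℝ (Fin n → ℝ)) :
    Set (Fin n → ℝ) :=
  {v | v ∈ Phi ρ ∧ ∀ j, v j ≤ 0}

/-- The set of real scalar multiples of the simple root `α_i`. -/
def multA {n : ℕ} (i : Fin n) : Set (Fin n → ℝ) :=
  {v | ∃ c : ℝ, v = c • (Pi.single i 1 : Fin n → ℝ)}

/-- `N_M(w)`: the set of positive roots sent by `w` to negative roots. -/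
def NM {n : ℕ} {W : Type*} [Group W] (ρ : W →* Module.End ℝ (Fin n → ℝ)) (w : W) :
    Set (Fin n → ℝ) :=
  {v | v ∈ PhiPlus ρ ∧ ρ w v ∈ PhiMinus ρ}

/-- Nodes `i` and `j` are odd-adjacent: `i ≠ j` and `m_ij` is odd. -/
def OAStep {n : ℕ} (K : CoxeterMatrix (Fin n)) (i j : Fin n) : Prop :=
  i ≠ j ∧ Odd (K i j)

/-- The constant `K_{ji} = −M_{ji}/(2cos(π/m_ij))` associated to an odd adjacency. -/
noncomputable def Kcoef {n : ℕ} (M : Matrix (Fin n) (Fin n) ℝ) (K : CoxeterMatrix (Fin n))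
    (i j : Fin n) : ℝ :=
  -(M j i) / (2 * Real.cos (Real.pi / (K i j : ℝ)))

/-- The product `Π_P` of the constants `K` along an OA-path starting at `i` and continuing
through the list `l`. -/
noncomputable def prodOA {n : ℕ} (M : Matrix (Fin n) (Fin n) ℝ) (K : CoxeterMatrix (Fin n)) :
    Fin n → List (Fin n) → ℝ
  | _, [] => 1
  | i, j :: l => Kcoef M K i j * prodOA M K j l

/-- The E-GCM graph is unital OA-cyclic: every OA-cycle has product `1`. -/
def UnitalOACyclic {n : ℕ} (M : Matrix (Fin n) (Fin n) ℝ) (K : CoxeterMatrix (Fin n)) : Prop :=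
  ∀ (i : Fin n) (l : List (Fin n)), List.Chain (OAStep K) i l →
    (i :: l).getLast (List.cons_ne_nil _ _) = i → prodOA M K i l = 1

/-- Two nodes are OA-connected if they are joined by an OA-path. -/
def OAConn {n : ℕ} (K : CoxeterMatrix (Fin n)) (i j : Fin n) : Prop :=
  Relation.ReflTransGen (OAStep K) i j

namespace OAProof

namespace OAAux

/-- rank-2 coefficient sequences -/
noncomputable def fgp (p q : ℝ) : ℕ → ℝ × ℝ
  | 0 => (1, 0)
  | t + 1 =>
      if Even t then ((fgp p q t).1, q * (fgp p q t).1 - (fgp p q t).2)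
      else (-(fgp p q t).1 + p * (fgp p q t).2, (fgp p q t).2)

variable (p q : ℝ)

lemma fgp_zero : fgp p q 0 = (1, 0) := rfl

lemma fgp_even_succ (r : ℕ) :
    fgp p q (2*r + 1) = ((fgp p q (2*r)).1, q * (fgp p q (2*r)).1 - (fgp p q (2*r)).2) := by
  rw [fgp]; simp [Nat.even_iff]

lemma fgp_odd_succ (r : ℕ) :
    fgp p q (2*r + 2) = (-(fgp p q (2*r+1)).1 + p * (fgp p q (2*r+1)).2, (fgp p q (2*r+1)).2) := by
  show fgp p q ((2*r+1) + 1) = _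
  rw [fgp]
  simp [Nat.even_iff, Nat.add_mod]

/-- f on even index -/
noncomputable def Fs (r : ℕ) : ℝ := (fgp p q (2*r)).1
/-- g on odd index -/
noncomputable def Gs (r : ℕ) : ℝ := (fgp p q (2*r+1)).2

lemma f_odd_eq (r : ℕ) : (fgp p q (2*r+1)).1 = Fs p q r := by
  rw [fgp_even_succ]; rfl

lemma g_even_eq (r : ℕ) : (fgp p q (2*r+2)).2 = Gs p q r := by
  rw [fgp_odd_succ]; rfl

lemma g_zero : (fgp p q 0).2 = 0 := rfl

lemma Fs_zero : Fs p q 0 = 1 := rfl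
lemma Gs_zero : Gs p q 0 = q := by
  show (fgp p q (2*0+1)).2 = q
  rw [fgp_even_succ]
  show q * (fgp p q 0).1 - (fgp p q 0).2 = q
  rw [fgp_zero]; ring

lemma Gs_succ (r : ℕ) : Gs p q (r+1) = q * Fs p q (r+1) - Gs p q r := by
  show (fgp p q (2*(r+1)+1)).2 = _
  rw [fgp_even_succ]
  show q * (fgp p q (2*(r+1))).1 - (fgp p q (2*(r+1))).2 = _
  congr 1
  show (fgp p q (2*r+2)).2 = Gs p q r
  exact g_even_eq p q r

lemma Fs_succ (r : ℕ) : Fs p q (r+1) = -Fs p q r + p * Gs p q r := by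
  show (fgp p q (2*r+2)).1 = _
  rw [fgp_odd_succ]
  rw [f_odd_eq]
  rfl

/-- trig step identity -/
lemma sin_step (θ x : ℝ) : Real.sin (x + 2*θ) = 2 * Real.cos θ * Real.sin (x + θ) - Real.sin x := by
  have h1 : x + 2*θ = (x + θ) + θ := by ring
  have h2 : x = (x + θ) - θ := by ring
  have hsx : Real.sin x = Real.sin (x+θ) * Real.cos θ - Real.cos (x+θ) * Real.sin θ := by
    have := Real.sin_sub (x+θ) θ
    rw [show x+θ-θ = x by ring] at this
    linarith
  rw [h1, Real.sin_add, hsx]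
  ring

section Finite

variable {p q : ℝ} {m : ℕ} (hm : 2 ≤ m)
  (hpq : p * q = 4 * Real.cos (π / m) ^ 2) (hp : 0 ≤ p) (hq : 0 ≤ q)

local notation "θ" => π / (m:ℝ)

include hpq hq in
lemma sinFG : ∀ r : ℕ,
    Real.sin θ * Fs p q r = Real.sin ((2*(r:ℝ)+1) * θ) ∧
    Real.sin θ * (p * Gs p q r) = 2 * Real.cos θ * Real.sin ((2*(r:ℝ)+2) * θ) := by
  intro r
  induction r with
  | zero =>
    constructor
    · rw [Fs_zero]; norm_num
    · rw [Gs_zero]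
      have : (2*((0:ℕ):ℝ)+2) * θ = θ + θ := by push_cast; ring
      rw [this, Real.sin_add, hpq]
      ring
  | succ r ih =>
    obtain ⟨ihF, ihG⟩ := ih
    have hF : Real.sin θ * Fs p q (r+1) = Real.sin ((2*((r+1:ℕ):ℝ)+1) * θ) := by
      rw [Fs_succ]
      have key : (2*((r+1:ℕ):ℝ)+1) * θ = (2*(r:ℝ)+1)*θ + 2*θ := by push_cast; ring
      rw [key, sin_step]
      have key2 : (2*(r:ℝ)+1)*θ + θ = (2*r+2)*θ := by ring
      rw [key2]
      push_cast at ihG ⊢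
      nlinarith [ihF, ihG]
    refine ⟨hF, ?_⟩
    rw [Gs_succ]
    have key : (2*((r+1:ℕ):ℝ)+2) * θ = (2*(r:ℝ)+2)*θ + 2*θ := by push_cast; ring
    rw [key, sin_step]
    have key2 : (2*(r:ℝ)+2)*θ + θ = (2*((r+1:ℕ):ℝ)+1)*θ := by push_cast; ring
    rw [key2]
    have : Real.sin θ * (p * (q * Fs p q (r+1) - Gs p q r))
        = p*q*(Real.sin θ * Fs p q (r+1)) - Real.sin θ * (p * Gs p q r) := by ring
    rw [this, hF, ihG, hpq]
    ring

end Finite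

end OAAux

namespace OAAux2
open OAAux

variable (p q : ℝ)

lemma f_eq (t : ℕ) : (fgp p q t).1 = Fs p q (t/2) := by
  rcases Nat.even_or_odd t with ⟨r, rfl⟩ | ⟨r, rfl⟩
  · rw [show r + r = 2*r by omega, show (2*r)/2 = r by omega]; rfl
  · rw [show 2*r+1 = 2*r+1 from rfl, f_odd_eq, show (2*r+1)/2 = r by omega]

lemma g_eq (t : ℕ) (ht : 1 ≤ t) : (fgp p q t).2 = Gs p q ((t-1)/2) := by
  rcases Nat.even_or_odd t with ⟨r, rfl⟩ | ⟨r, rfl⟩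
  · have hr : 1 ≤ r := by omega
    rw [show r + r = 2*(r-1)+2 by omega, g_even_eq]
    congr 1
    omega
  · rw [show (2*r+1-1)/2 = r by omega]; rfl

lemma Gs_q_zero (hq : q = 0) : ∀ r, Gs p q r = 0 := by
  intro r
  induction r with
  | zero => rw [Gs_zero, hq]
  | succ r ih => rw [Gs_succ, ih, hq]; ring

section Finite

variable {p q : ℝ} {m : ℕ} (hm : 2 ≤ m)
  (hpq : p * q = 4 * Real.cos (π / m) ^ 2) (hp : 0 ≤ p) (hq : 0 ≤ q)
  (hp0 : p = 0 ↔ q = 0)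

local notation "θ" => π / (m:ℝ)

include hm

lemma theta_pos : 0 < θ := by
  apply div_pos Real.pi_pos
  exact_mod_cast by omega

lemma theta_le : θ ≤ π / 2 := by
  have hm0 : (2:ℝ) ≤ m := by exact_mod_cast hm
  rw [div_le_div_iff₀ (by linarith) (by norm_num)]
  nlinarith [Real.pi_pos]

lemma sin_theta_pos : 0 < Real.sin θ := by
  apply Real.sin_pos_of_pos_of_lt_pi (theta_pos hm)
  calc π / (m:ℝ) ≤ π / 2 := theta_le hm
    _ < π := by linarith [Real.pi_pos]

lemma cos_theta_nonneg : 0 ≤ Real.cos θ := by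
  apply Real.cos_nonneg_of_mem_Icc
  constructor
  · linarith [theta_pos hm, Real.pi_pos]
  · exact theta_le hm

lemma cos_theta_pos (hm3 : 3 ≤ m) : 0 < Real.cos θ := by
  apply Real.cos_pos_of_mem_Ioo
  have hm0 : (3:ℝ) ≤ m := by exact_mod_cast hm3
  constructor
  · linarith [theta_pos hm, Real.pi_pos]
  · rw [div_lt_div_iff₀ (by linarith) (by norm_num)]
    nlinarith [Real.pi_pos]

lemma m_theta : (m:ℝ) * θ = π := by
  field_simp

lemma angle_pos {k : ℕ} (hk : 1 ≤ k) : 0 < (k:ℝ) * θ := by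
  apply mul_pos _ (theta_pos hm)
  exact_mod_cast hk

lemma angle_le_pi {k : ℕ} (hk : k ≤ m) : (k:ℝ) * θ ≤ π := by
  have hm0 : (0:ℝ) < m := by exact_mod_cast by omega
  have hk' : (k:ℝ) ≤ m := by exact_mod_cast hk
  rw [mul_div_assoc', div_le_iff₀ hm0]
  nlinarith [Real.pi_pos]

lemma angle_lt_pi {k : ℕ} (hk : k < m) : (k:ℝ) * θ < π := by
  have hm0 : (0:ℝ) < m := by exact_mod_cast by omega
  have hk' : (k:ℝ) < m := by exact_mod_cast hk
  rw [mul_div_assoc', div_lt_iff₀ hm0]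
  nlinarith [Real.pi_pos]

lemma sin_angle_nonneg {k : ℕ} (hk : k ≤ m) : 0 ≤ Real.sin ((k:ℝ) * θ) := by
  rcases Nat.eq_zero_or_pos k with rfl | hk1
  · simp
  · exact Real.sin_nonneg_of_nonneg_of_le_pi (angle_pos hm hk1).le (angle_le_pi hm hk)

lemma sin_angle_zero {k : ℕ} (hk1 : 1 ≤ k) (hk : k ≤ m)
    (h : Real.sin ((k:ℝ) * θ) = 0) : k = m := by
  by_contra hne
  have hlt : (k:ℝ) * θ < π := angle_lt_pi hm (by omega)
  have := (Real.sin_eq_zero_iff_of_lt_of_lt (by linarith [angle_pos hm hk1]) hlt).mp h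
  have := angle_pos hm hk1
  linarith

include hpq hq in
lemma Fs_sin (r : ℕ) : Real.sin θ * Fs p q r = Real.sin (((2*r+1 : ℕ):ℝ) * θ) := by
  have := (sinFG hpq hq r).1
  rw [this]; norm_num

include hpq hq in
lemma Gs_sin (r : ℕ) :
    Real.sin θ * (p * Gs p q r) = 2 * Real.cos θ * Real.sin (((2*r+2 : ℕ):ℝ) * θ) := by
  have := (sinFG hpq hq r).2
  rw [this]; norm_num

include hpq hq in
lemma Fs_nonneg {r : ℕ} (hr : 2*r+1 ≤ m) : 0 ≤ Fs p q r := by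
  have h1 := Fs_sin hm hpq hq (p := p) r
  have h2 := sin_angle_nonneg hm hr
  have h3 := sin_theta_pos hm
  nlinarith

include hpq hp hq hp0 in
lemma Gs_nonneg {r : ℕ} (hr : 2*r+2 ≤ m) : 0 ≤ Gs p q r := by
  rcases eq_or_lt_of_le hp with hp' | hp'
  · rw [Gs_q_zero p q (hp0.mp hp'.symm)]
  · have h1 := Gs_sin hm hpq hq (p := p) r
    have h2 := sin_angle_nonneg hm hr
    have h3 := sin_theta_pos hm
    have h4 := cos_theta_nonneg hm
    have h5 : 0 < Real.sin θ * p := mul_pos h3 hp'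
    by_contra hneg
    push_neg at hneg
    have h6 : Real.sin θ * p * Gs p q r < 0 := mul_neg_of_pos_of_neg h5 hneg
    nlinarith

end Finite

section FiniteMore

variable {p q : ℝ} {m : ℕ} (hm : 2 ≤ m)
  (hpq : p * q = 4 * Real.cos (π / m) ^ 2) (hp : 0 ≤ p) (hq : 0 ≤ q)
  (hp0 : p = 0 ↔ q = 0)

local notation "θ" => π / (m:ℝ)

include hm hpq hq in
lemma fg_nonneg (t : ℕ) (ht : t + 1 ≤ m) (hp' : 0 ≤ p) (hp0' : p = 0 ↔ q = 0) :
    0 ≤ (fgp p q t).1 ∧ 0 ≤ (fgp p q t).2 := by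
  constructor
  · rw [f_eq]
    exact Fs_nonneg hm hpq hq (by omega)
  · rcases Nat.eq_zero_or_pos t with rfl | ht1
    · rw [g_zero]
    · rw [g_eq p q t ht1]
      exact Gs_nonneg hm hpq hp' hq hp0' (by omega)

include hm hpq hq hp hp0 in
lemma p_pos_of_m3 (hm3 : 3 ≤ m) : 0 < p := by
  rcases eq_or_lt_of_le hp with hp' | hp'
  · exfalso
    have hc := cos_theta_pos hm hm3
    have : q = 0 := hp0.mp hp'.symm
    rw [← hp', this] at hpq
    nlinarith
  · exact hp'

include hm hpq hq in
lemma sin_m_sub_one : Real.sin (((m - 1 : ℕ):ℝ) * θ) = Real.sin θ := by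
  have h1 : ((m - 1 : ℕ):ℝ) = (m:ℝ) - 1 := by
    have : (1:ℝ) ≤ (m:ℝ) := by exact_mod_cast by omega
    push_cast [Nat.cast_sub (by omega : 1 ≤ m)]
    ring
  have hm0 : (m:ℝ) ≠ 0 := by exact_mod_cast by omega
  have h2 : ((m:ℝ) - 1) * θ = π - θ := by field_simp
  rw [h1, h2, Real.sin_pi_sub]

include hm hpq hq in
lemma sin_m : Real.sin ((m:ℝ) * θ) = 0 := by
  have hm0 : (m:ℝ) ≠ 0 := by exact_mod_cast by omega
  have : (m:ℝ) * θ = π := by field_simp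
  rw [this, Real.sin_pi]

include hm hpq hq in
lemma sin_m_add_one : Real.sin (((m + 1 : ℕ):ℝ) * θ) = -Real.sin θ := by
  have hm0 : (m:ℝ) ≠ 0 := by exact_mod_cast by omega
  have h2 : ((m:ℝ) + 1) * θ = π + θ := by field_simp
  push_cast
  rw [h2, Real.sin_add, Real.sin_pi, Real.cos_pi]
  ring

include hm hpq hp hq hp0 in
lemma g_zero_imp (t : ℕ) (ht1 : 1 ≤ t) (htm : t + 1 ≤ m)
    (hg : (fgp p q t).2 = 0) : (fgp p q t).1 = 1 := by
  have hsin := sin_theta_pos hm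
  rcases eq_or_lt_of_le ht1 with ht1' | ht2
  · -- t = 1
    rw [← ht1', f_eq]
    exact Fs_zero p q
  · -- t ≥ 2, so m ≥ 3
    have hm3 : 3 ≤ m := by omega
    have hcos := cos_theta_pos hm hm3
    have hpp : 0 < p := p_pos_of_m3 hm hpq hp hq hp0 hm3
    rw [g_eq p q t ht1] at hg
    have hG := Gs_sin hm hpq hq (p := p) ((t-1)/2)
    rw [hg] at hG
    have hsin2 : Real.sin (((2*((t-1)/2)+2 : ℕ):ℝ) * θ) = 0 := by
      have h0 : (0:ℝ) = 2 * Real.cos θ * Real.sin (((2*((t-1)/2)+2 : ℕ):ℝ) * θ) := by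
        rw [← hG]; ring
      nlinarith [h0]
    have h2r2 : 2*((t-1)/2)+2 = m := sin_angle_zero hm (by omega) (by omega) hsin2
    have htodd : t = 2*((t-1)/2)+1 := by omega
    rw [f_eq]
    have hFr := Fs_sin hm hpq hq (p := p) (t/2)
    rw [show 2*(t/2)+1 = m - 1 by omega] at hFr
    rw [sin_m_sub_one hm hpq hq] at hFr
    have := mul_left_cancel₀ (ne_of_gt hsin) (by rw [hFr]; ring : Real.sin θ * Fs p q (t/2) = Real.sin θ * 1)
    rw [this]

include hm hpq hp hq hp0 in
lemma f_zero_imp (t : ℕ) (ht1 : 1 ≤ t) (htm : t + 1 ≤ m)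
    (hf : (fgp p q t).1 = 0) : Odd m ∧ t = m - 1 ∧ 2 * Real.cos θ * (fgp p q t).2 = q := by
  have hsin := sin_theta_pos hm
  rw [f_eq] at hf
  have hF := Fs_sin hm hpq hq (p := p) (t/2)
  rw [hf, mul_zero] at hF
  have hk : 2*(t/2)+1 = m := sin_angle_zero hm (by omega) (by omega) hF.symm
  have hteven : t = 2*(t/2) := by omega
  have htm1 : t = m - 1 := by omega
  have hmodd : Odd m := by
    refine ⟨t/2, by omega⟩
  have hm3 : 3 ≤ m := by
    rcases hmodd with ⟨j, hj⟩; omega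
  have hcos := cos_theta_pos hm hm3
  have hpp : 0 < p := p_pos_of_m3 hm hpq hp hq hp0 hm3
  refine ⟨hmodd, htm1, ?_⟩
  have hr1 : 1 ≤ t/2 := by omega
  rw [g_eq p q t ht1]
  have hG := Gs_sin hm hpq hq (p := p) ((t-1)/2)
  rw [show 2*((t-1)/2)+2 = m - 1 by omega] at hG
  rw [sin_m_sub_one hm hpq hq] at hG
  -- hG : sin θ * (p * G) = 2 cos θ * sin θ
  have h6 : p * Gs p q ((t-1)/2) = 2 * Real.cos θ := by
    have := mul_left_cancel₀ (ne_of_gt hsin) (by rw [hG]; ring :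
      Real.sin θ * (p * Gs p q ((t-1)/2)) = Real.sin θ * (2 * Real.cos θ))
    exact this
  have key : (2 * Real.cos θ) * (2 * Real.cos θ * Gs p q ((t-1)/2)) = (2 * Real.cos θ) * q := by
    nlinarith [h6, hpq]
  exact mul_left_cancel₀ (by positivity) key

include hm hpq hp hq hp0 in
lemma boundary_odd (hmodd : Odd m) :
    (fgp p q (m-1)).1 = 0 ∧ 2 * Real.cos θ * (fgp p q (m-1)).2 = q := by
  have hm3 : 3 ≤ m := by rcases hmodd with ⟨j, hj⟩; omega
  have hsin := sin_theta_pos hm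
  have hf : (fgp p q (m-1)).1 = 0 := by
    rw [f_eq]
    have hF := Fs_sin hm hpq hq (p := p) ((m-1)/2)
    obtain ⟨j, hj⟩ := hmodd
    rw [show 2*((m-1)/2)+1 = m by omega] at hF
    rw [show (((m:ℕ)):ℝ) = (m:ℝ) from rfl, sin_m hm hpq hq] at hF
    exact mul_left_cancel₀ (ne_of_gt hsin) (by rw [hF]; ring)
  refine ⟨hf, (f_zero_imp hm hpq hp hq hp0 (m-1) (by omega) (by omega) hf).2.2⟩

include hm hpq hp hq hp0 in
lemma boundary_even (hmeven : Even m) :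
    (fgp p q m).1 = -1 ∧ (fgp p q m).2 = 0 := by
  have hsin := sin_theta_pos hm
  constructor
  · rw [f_eq]
    have hF := Fs_sin hm hpq hq (p := p) (m/2)
    obtain ⟨j, hj⟩ := hmeven
    rw [show 2*(m/2)+1 = m + 1 by omega] at hF
    rw [sin_m_add_one hm hpq hq] at hF
    exact mul_left_cancel₀ (ne_of_gt hsin) (by rw [hF]; ring)
  · rcases eq_or_lt_of_le hp with hp' | hp'
    · rw [g_eq p q m (by omega), Gs_q_zero p q (hp0.mp hp'.symm)]
    · rw [g_eq p q m (by omega)]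
      have hG := Gs_sin hm hpq hq (p := p) ((m-1)/2)
      obtain ⟨j, hj⟩ := hmeven
      rw [show 2*((m-1)/2)+2 = m by omega] at hG
      rw [show (((m:ℕ)):ℝ) = (m:ℝ) from rfl, sin_m hm hpq hq, mul_zero] at hG
      have h5 : Real.sin θ * p ≠ 0 := ne_of_gt (mul_pos hsin hp')
      have : Real.sin θ * (p * Gs p q ((m-1)/2)) = Real.sin θ * p * Gs p q ((m-1)/2) := by ring
      rw [this] at hG
      exact (mul_eq_zero.mp hG).resolve_left h5

include hm hpq hp hq hp0 in
lemma boundary_odd_full (hmodd : Odd m) :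
    (fgp p q m).1 = 0 ∧ 2 * Real.cos θ * (fgp p q m).2 = -q := by
  have hm3 : 3 ≤ m := by rcases hmodd with ⟨j, hj⟩; omega
  have hsin := sin_theta_pos hm
  have hcos := cos_theta_pos hm hm3
  have hpp : 0 < p := p_pos_of_m3 hm hpq hp hq hp0 hm3
  constructor
  · rw [f_eq]
    have hF := Fs_sin hm hpq hq (p := p) (m/2)
    obtain ⟨j, hj⟩ := hmodd
    rw [show 2*(m/2)+1 = m by omega] at hF
    rw [show (((m:ℕ)):ℝ) = (m:ℝ) from rfl, sin_m hm hpq hq] at hF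
    exact mul_left_cancel₀ (ne_of_gt hsin) (by rw [hF]; ring)
  · rw [g_eq p q m (by omega)]
    have hG := Gs_sin hm hpq hq (p := p) ((m-1)/2)
    obtain ⟨j, hj⟩ := hmodd
    rw [show 2*((m-1)/2)+2 = m + 1 by omega] at hG
    rw [sin_m_add_one hm hpq hq] at hG
    have h6 : p * Gs p q ((m-1)/2) = -(2 * Real.cos θ) := by
      have := mul_left_cancel₀ (ne_of_gt hsin) (by rw [hG]; ring :
        Real.sin θ * (p * Gs p q ((m-1)/2)) = Real.sin θ * (-(2 * Real.cos θ)))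
      exact this
    have key : (2 * Real.cos θ) * (2 * Real.cos θ * Gs p q ((m-1)/2)) = (2 * Real.cos θ) * (-q) := by
      nlinarith [h6, hpq]
    exact mul_left_cancel₀ (by positivity) key

end FiniteMore

section Infinite

variable {p q : ℝ} (hpq4 : 4 ≤ p * q) (hp : 0 ≤ p) (hq : 0 ≤ q)

include hpq4 hp hq in
lemma q_pos_inf : 0 < q := by
  rcases eq_or_lt_of_le hq with h | h
  · exfalso; rw [← h] at hpq4; nlinarith
  · exact h

include hpq4 hp hq in
lemma Einv : ∀ r, 1 ≤ Fs p q r ∧ q * Fs p q r ≤ 2 * Gs p q r := by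
  have hq' := q_pos_inf hpq4 hp hq
  intro r
  induction r with
  | zero =>
    rw [Fs_zero, Gs_zero]
    constructor
    · exact le_refl 1
    · linarith
  | succ r ih =>
    obtain ⟨ihF, ihG⟩ := ih
    have hGpos : 0 < Gs p q r := by nlinarith
    have hF1 : 1 ≤ Fs p q (r+1) := by
      rw [Fs_succ]
      nlinarith [mul_le_mul_of_nonneg_left ihG hp]
    refine ⟨hF1, ?_⟩
    rw [Gs_succ]
    have h1 : q * Fs p q (r+1) = -(q * Fs p q r) + p * q * Gs p q r := by
      rw [Fs_succ]; ring
    nlinarith [mul_le_mul_of_nonneg_right hpq4 hGpos.le]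

include hpq4 hp hq in
lemma fg_inf (t : ℕ) :
    1 ≤ (fgp p q t).1 ∧ 0 ≤ (fgp p q t).2 ∧ (1 ≤ t → 0 < (fgp p q t).2) := by
  have hq' := q_pos_inf hpq4 hp hq
  refine ⟨?_, ?_, ?_⟩
  · rw [f_eq]; exact (Einv hpq4 hp hq (t/2)).1
  · rcases Nat.eq_zero_or_pos t with rfl | ht1
    · rw [g_zero]
    · rw [g_eq p q t ht1]
      obtain ⟨h1, h2⟩ := Einv hpq4 hp hq ((t-1)/2)
      nlinarith
  · intro ht1
    rw [g_eq p q t ht1]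
    obtain ⟨h1, h2⟩ := Einv hpq4 hp hq ((t-1)/2)
    nlinarith

end Infinite

end OAAux2

namespace OAGeo
open CoxeterSystem

variable {n : ℕ} {W : Type*} [Group W]
  (M : Matrix (Fin n) (Fin n) ℝ) (K : CoxeterMatrix (Fin n))
  (cs : CoxeterSystem K W)
  (ρ : W →* Module.End ℝ (Fin n → ℝ))

lemma sum_single (i k : Fin n) :
    (∑ j, M i j * (Pi.single k 1 : Fin n → ℝ) j) = M i k := by
  rw [Finset.sum_eq_single k]
  · simp
  · intro j _ hj
    simp [Pi.single_apply, hj]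
  · simp

variable (hρ : ∀ i, ρ (cs.simple i) = reflLin M i)

include hρ in
lemma rho_single (i k : Fin n) :
    ρ (cs.simple i) (Pi.single k 1) = Pi.single k 1 - M i k • (Pi.single i 1 : Fin n → ℝ) := by
  rw [hρ]
  show (Pi.single k 1 : Fin n → ℝ) - (∑ j, M i j * (Pi.single k 1 : Fin n → ℝ) j) •
    (Pi.single i 1 : Fin n → ℝ) = _
  rw [sum_single]

end OAGeo

-- import the scalar development
section Beta
open CoxeterSystem

variable {n : ℕ} {W : Type*} [Group W]
  {M : Matrix (Fin n) (Fin n) ℝ} {K : CoxeterMatrix (Fin n)}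
  (cs : CoxeterSystem K W)
  (ρ : W →* Module.End ℝ (Fin n → ℝ))
  (hρ : ∀ i, ρ (cs.simple i) = reflLin M i)
  (hMK : IsEGCM M K)

open OAAux

lemma fgp_succ_even (p q : ℝ) {t : ℕ} (h : Even t) :
    fgp p q (t+1) = ((fgp p q t).1, q * (fgp p q t).1 - (fgp p q t).2) := by
  rw [fgp, if_pos h]

lemma fgp_succ_odd (p q : ℝ) {t : ℕ} (h : ¬ Even t) :
    fgp p q (t+1) = (-(fgp p q t).1 + p * (fgp p q t).2, (fgp p q t).2) := by
  rw [fgp, if_neg h]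

include hρ hMK in
lemma betaVec (i k : Fin n) (hik : i ≠ k) : ∀ t : ℕ,
    ρ (cs.wordProd (alternatingWord i k t)) (Pi.single i 1)
      = (fgp (-M i k) (-M k i) t).1 • (Pi.single i 1 : Fin n → ℝ)
        + (fgp (-M i k) (-M k i) t).2 • (Pi.single k 1 : Fin n → ℝ) := by
  intro t
  induction t with
  | zero =>
    show ρ (cs.wordProd []) _ = _
    rw [cs.wordProd_nil, map_one]
    show (Pi.single i 1 : Fin n → ℝ) = (1:ℝ) • _ + (0:ℝ) • _
    simp
  | succ t ih =>
    rw [alternatingWord_succ', cs.wordProd_cons, map_mul, Module.End.mul_apply, ih]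
    by_cases ht : Even t
    · rw [if_pos ht, fgp_succ_even _ _ ht]
      rw [map_add, map_smul, map_smul, OAGeo.rho_single M K cs ρ hρ k i, OAGeo.rho_single M K cs ρ hρ k k,
        hMK.1 k]
      ext y
      simp only [Pi.add_apply, Pi.smul_apply, Pi.sub_apply, smul_eq_mul]
      ring
    · rw [if_neg ht, fgp_succ_odd _ _ ht]
      rw [map_add, map_smul, map_smul, OAGeo.rho_single M K cs ρ hρ i i, OAGeo.rho_single M K cs ρ hρ i k,
        hMK.1 i]
      ext y
      simp only [Pi.add_apply, Pi.smul_apply, Pi.sub_apply, smul_eq_mul]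
      ring

end Beta

section Strip
open CoxeterSystem

variable {n : ℕ} {W : Type*} [Group W]
  {M : Matrix (Fin n) (Fin n) ℝ} {K : CoxeterMatrix (Fin n)}
  (cs : CoxeterSystem K W)

local prefix:100 "ℓ" => cs.length
local prefix:100 "π" => cs.wordProd

lemma word_cancel_right (u : W) (ω : List (Fin n)) (k : Fin n) :
    u * π (ω.concat k) * cs.simple k = u * π ω := by
  rw [cs.wordProd_concat, ← mul_assoc, mul_assoc _ _ (cs.simple k),
    cs.simple_mul_simple_self, mul_one]

lemma strip : ∀ N : ℕ, ∀ w : W, ℓ w ≤ N → ∀ i k : Fin n, i ≠ k →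
    ∃ (u : W) (t : ℕ), ℓ w = ℓ u + t ∧
      ¬ cs.IsRightDescent u i ∧ ¬ cs.IsRightDescent u k ∧
      (w = u * π (alternatingWord i k t) ∨ w = u * π (alternatingWord k i t)) := by
  intro N
  induction N with
  | zero =>
    intro w hw i k hik
    have hw1 : w = 1 := cs.length_eq_zero_iff.mp (Nat.le_zero.mp hw)
    subst hw1
    exact ⟨1, 0, by simp, cs.not_isRightDescent_one i, cs.not_isRightDescent_one k,
      Or.inl (by simp [alternatingWord])⟩
  | succ N ih =>
    intro w hw i k hik
    by_cases hdk : cs.IsRightDescent w k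
    · -- strip k
      have hlen : ℓ (w * cs.simple k) + 1 = ℓ w := (cs.isRightDescent_iff).mp hdk
      obtain ⟨u, t, hl, hui, huk, hcase⟩ := ih (w * cs.simple k) (by omega) i k hik
      have hwk : w = (w * cs.simple k) * cs.simple k := by
        rw [cs.simple_mul_simple_cancel_right]
      rcases Nat.eq_zero_or_pos t with rfl | ht
      · -- t = 0 : w' = u, w = u * s k = u * π (altWord i k 1)
        refine ⟨u, 1, by omega, hui, huk, Or.inl ?_⟩
        have hu : w * cs.simple k = u := by
          rcases hcase with h | h <;> simpa [alternatingWord] using h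
        rw [hwk, hu]
        congr 1
        show cs.simple k = π ((alternatingWord k i 0).concat k)
        simp [alternatingWord]
      · obtain ⟨t', rfl⟩ : ∃ t', t = t' + 1 := ⟨t - 1, by omega⟩
        rcases hcase with h | h
        · -- ends with k : contradiction
          exfalso
          have hww : w = u * π (alternatingWord k i t') := by
            rw [hwk, h, alternatingWord_succ]
            exact word_cancel_right cs u _ k
          have h1 : ℓ w ≤ ℓ u + t' := by
            calc ℓ w ≤ ℓ u + ℓ (π (alternatingWord k i t')) := by
                  rw [hww]; exact cs.length_mul_le _ _
              _ ≤ ℓ u + t' := by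
                  have := cs.length_wordProd_le (alternatingWord k i t')
                  rw [length_alternatingWord] at this
                  omega
          omega
        · -- ends with i : extend
          refine ⟨u, t' + 2, by omega, hui, huk, Or.inl ?_⟩
          rw [hwk, h, alternatingWord_succ i k (t'+1), cs.wordProd_concat, mul_assoc]
    · by_cases hdi : cs.IsRightDescent w i
      · -- strip i (symmetric)
        have hlen : ℓ (w * cs.simple i) + 1 = ℓ w := (cs.isRightDescent_iff).mp hdi
        obtain ⟨u, t, hl, hui, huk, hcase⟩ := ih (w * cs.simple i) (by omega) i k hik
        have hwk : w = (w * cs.simple i) * cs.simple i := by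
          rw [cs.simple_mul_simple_cancel_right]
        rcases Nat.eq_zero_or_pos t with rfl | ht
        · refine ⟨u, 1, by omega, hui, huk, Or.inr ?_⟩
          have hu : w * cs.simple i = u := by
            rcases hcase with h | h <;> simpa [alternatingWord] using h
          rw [hwk, hu]
          congr 1
          show cs.simple i = π ((alternatingWord i k 0).concat i)
          simp [alternatingWord]
        · obtain ⟨t', rfl⟩ : ∃ t', t = t' + 1 := ⟨t - 1, by omega⟩
          rcases hcase with h | h
          · -- ends with i?? alternatingWord i k (t'+1) ends with k; stripping i from it:
            -- extend to  altWord k i (t'+2)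
            refine ⟨u, t' + 2, by omega, hui, huk, Or.inr ?_⟩
            rw [hwk, h, alternatingWord_succ k i (t'+1), cs.wordProd_concat, mul_assoc]
          · -- ends with i : contradiction
            exfalso
            have hww : w = u * π (alternatingWord i k t') := by
              rw [hwk, h, alternatingWord_succ]
              exact word_cancel_right cs u _ i
            have h1 : ℓ w ≤ ℓ u + t' := by
              calc ℓ w ≤ ℓ u + ℓ (π (alternatingWord i k t')) := by
                    rw [hww]; exact cs.length_mul_le _ _
                _ ≤ ℓ u + t' := by
                    have := cs.length_wordProd_le (alternatingWord i k t')
                    rw [length_alternatingWord] at this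
                    omega
            omega
      · exact ⟨w, 0, by simp, hdi, hdk, Or.inl (by simp [alternatingWord])⟩

end Strip

section Pos
open CoxeterSystem OAAux OAAux2

variable {n : ℕ} {W : Type*} [Group W]
  {M : Matrix (Fin n) (Fin n) ℝ} {K : CoxeterMatrix (Fin n)}
  (cs : CoxeterSystem K W)
  (ρ : W →* Module.End ℝ (Fin n → ℝ))
  (hρ : ∀ i, ρ (cs.simple i) = reflLin M i)
  (hMK : IsEGCM M K)

local prefix:100 "ℓ" => cs.length
local prefix:100 "π" => cs.wordProd

include hMK in
lemma fg_edge_nonneg (i k : Fin n) (hik : i ≠ k) (t : ℕ)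
    (ht : K i k = 0 ∨ t + 1 ≤ K i k) :
    0 ≤ (fgp (-M i k) (-M k i) t).1 ∧ 0 ≤ (fgp (-M i k) (-M k i) t).2 := by
  have hp : 0 ≤ -M i k := by linarith [hMK.2.1 i k hik]
  have hq : 0 ≤ -M k i := by linarith [hMK.2.1 k i (Ne.symm hik)]
  have hp0 : -M i k = 0 ↔ -M k i = 0 := by
    rw [neg_eq_zero, neg_eq_zero]; exact hMK.2.2.1 i k
  rcases hMK.2.2.2 i k hik with ⟨hK0, hge⟩ | ⟨hK2, heq⟩
  · have hpq4 : 4 ≤ (-M i k) * (-M k i) := by rw [neg_mul_neg]; exact hge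
    obtain ⟨h1, h2, _⟩ := fg_inf hpq4 hp hq t
    exact ⟨by linarith, h2⟩
  · have htm : t + 1 ≤ K i k := by
      rcases ht with h | h
      · omega
      · exact h
    have hpq : (-M i k) * (-M k i) = 4 * Real.cos (π / (K i k : ℝ)) ^ 2 := by
      rw [neg_mul_neg]; exact heq
    exact fg_nonneg hK2 hpq hq t htm hp hp0

lemma desc_of_word_end (u w : W) (i k : Fin n) (t : ℕ)
    (hw : w = u * π (alternatingWord k i (t+1))) (hlen : ℓ u + t < ℓ w) :
    cs.IsRightDescent w i := by
  have hwsi : w * cs.simple i = u * π (alternatingWord i k t) := by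
    rw [hw, alternatingWord_succ, cs.wordProd_concat, mul_assoc,
      cs.simple_mul_simple_cancel_right]
  show ℓ (w * cs.simple i) < ℓ w
  calc ℓ (w * cs.simple i) ≤ ℓ u + ℓ (π (alternatingWord i k t)) := by
        rw [hwsi]; exact cs.length_mul_le _ _
    _ ≤ ℓ u + t := by
        have := cs.length_wordProd_le (alternatingWord i k t)
        rw [length_alternatingWord] at this
        omega
    _ < ℓ w := hlen

lemma braid_eq (i k : Fin n) :
    π (alternatingWord i k (K i k)) = π (alternatingWord k i (K i k)) := by
  have h := cs.wordProd_braidWord_eq i k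
  rwa [CoxeterSystem.braidWord, CoxeterSystem.braidWord, K.symmetric k i] at h

/-- In the "good" case, the alternating word length is within range. -/
lemma range_of_no_descent_i {w u : W} {i k : Fin n} {t : ℕ}
    (hcw : w = u * π (alternatingWord i k t)) (hl : ℓ w = ℓ u + t) (ht1 : 1 ≤ t)
    (hdi : ¬ cs.IsRightDescent w i) : K i k = 0 ∨ t + 1 ≤ K i k := by
  by_cases hK0 : K i k = 0
  · exact Or.inl hK0
  right
  have hred : ℓ (π (alternatingWord i k t)) = t := by
    have h1 : ℓ w ≤ ℓ u + ℓ (π (alternatingWord i k t)) := by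
      rw [hcw]; exact cs.length_mul_le _ _
    have h2 := cs.length_wordProd_le (alternatingWord i k t)
    rw [length_alternatingWord] at h2
    omega
  have hle : t ≤ K i k := by
    by_contra hgt
    push_neg at hgt
    exact cs.not_isReduced_alternatingWord i k hK0 hgt
      (by rw [CoxeterSystem.IsReduced, length_alternatingWord]; exact hred)
  rcases Nat.lt_or_ge t (K i k) with h | h
  · omega
  · exfalso
    have htK : t = K i k := by omega
    apply hdi
    apply desc_of_word_end cs u w i k (t-1)
    · rw [hcw, htK, braid_eq cs i k, ← htK, show alternatingWord k i t
        = alternatingWord k i ((t-1)+1) by rw [Nat.sub_add_cancel ht1]]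
    · omega

include hρ hMK in
lemma pos_aux : ∀ N : ℕ, ∀ w : W, ℓ w ≤ N → ∀ i : Fin n, ¬ cs.IsRightDescent w i →
    ∀ y, 0 ≤ ρ w (Pi.single i 1) y := by
  intro N
  induction N with
  | zero =>
    intro w hw i _ y
    have hw1 : w = 1 := cs.length_eq_zero_iff.mp (Nat.le_zero.mp hw)
    subst hw1
    rw [map_one, Module.End.one_apply, Pi.single_apply]
    positivity
  | succ N ih =>
    intro w hw i hdi y
    by_cases hw1 : w = 1
    · subst hw1
      rw [map_one, Module.End.one_apply, Pi.single_apply]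
      positivity
    obtain ⟨k, hdk⟩ := cs.exists_rightDescent_of_ne_one hw1
    have hik : i ≠ k := by rintro rfl; exact hdi hdk
    obtain ⟨u, t, hl, hui, huk, hcase⟩ := strip cs (N+1) w hw i k hik
    have ht1 : 1 ≤ t := by
      rcases Nat.eq_zero_or_pos t with rfl | h
      · exfalso
        have hu : w = u := by
          rcases hcase with h | h <;> simpa [alternatingWord] using h
        rw [hu] at hdk
        exact huk hdk
      · exact h
    have hlu : ℓ u ≤ N := by omega
    rcases hcase with hcw | hcw
    · have htK := range_of_no_descent_i cs hcw hl ht1 hdi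
      have hfg := fg_edge_nonneg hMK i k hik t htK
      have hvec : ρ w (Pi.single i 1)
          = (fgp (-M i k) (-M k i) t).1 • ρ u (Pi.single i 1)
            + (fgp (-M i k) (-M k i) t).2 • ρ u (Pi.single k 1) := by
        rw [hcw, map_mul, Module.End.mul_apply, betaVec cs ρ hρ hMK i k hik t,
          map_add, map_smul, map_smul]
      rw [hvec]
      have h1 := ih u hlu i hui y
      have h2 := ih u hlu k huk y
      show 0 ≤ (fgp (-M i k) (-M k i) t).1 • ρ u (Pi.single i 1) y
        + (fgp (-M i k) (-M k i) t).2 • ρ u (Pi.single k 1) y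
      have := mul_nonneg hfg.1 h1
      have := mul_nonneg hfg.2 h2
      simp only [smul_eq_mul]
      linarith
    · exfalso
      apply hdi
      apply desc_of_word_end cs u w i k (t-1)
      · rw [hcw, show alternatingWord k i t
          = alternatingWord k i ((t-1)+1) by rw [Nat.sub_add_cancel ht1]]
      · omega

include hρ hMK in
lemma neg_of_descent (w : W) (i : Fin n) (hd : cs.IsRightDescent w i) :
    ∀ y, ρ w (Pi.single i 1) y ≤ 0 := by
  intro y
  have hnd : ¬ cs.IsRightDescent (w * cs.simple i) i :=
    (cs.isRightDescent_iff_not_isRightDescent_mul).mp hd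
  have hsi : ρ (cs.simple i) (Pi.single i 1) = -(Pi.single i 1 : Fin n → ℝ) := by
    rw [OAGeo.rho_single M K cs ρ hρ i i, hMK.1 i]
    ext z
    simp only [Pi.sub_apply, Pi.smul_apply, Pi.neg_apply, smul_eq_mul]
    ring
  have hww : w = (w * cs.simple i) * cs.simple i := by
    rw [cs.simple_mul_simple_cancel_right]
  have : ρ w (Pi.single i 1) = -(ρ (w * cs.simple i) (Pi.single i 1)) := by
    nth_rw 1 [hww]
    rw [map_mul, Module.End.mul_apply, hsi, map_neg]
  rw [this]
  have := pos_aux cs ρ hρ hMK (ℓ (w * cs.simple i)) (w * cs.simple i) le_rfl i hnd y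
  simp only [Pi.neg_apply]
  linarith

end Pos



section ThmD
open CoxeterSystem OAAux OAAux2

variable {n : ℕ} {W : Type*} [Group W]
  {M : Matrix (Fin n) (Fin n) ℝ} {K : CoxeterMatrix (Fin n)}
  (cs : CoxeterSystem K W)
  (ρ : W →* Module.End ℝ (Fin n → ℝ))
  (hρ : ∀ i, ρ (cs.simple i) = reflLin M i)
  (hMK : IsEGCM M K)

local prefix:100 "ℓ" => cs.length
local prefix:100 "π" => cs.wordProd

lemma rho_cancel (u : W) (v : Fin n → ℝ) : ρ u⁻¹ (ρ u v) = v := by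
  rw [← Module.End.mul_apply, ← map_mul, inv_mul_cancel, map_one, Module.End.one_apply]

lemma rho_injective (u : W) : Function.Injective (ρ u) := by
  intro a b h
  have := congrArg (ρ u⁻¹) h
  rwa [rho_cancel, rho_cancel] at this

include hMK in
lemma edge_data {i k : Fin n} (hik : i ≠ k) (hK0 : K i k ≠ 0) :
    2 ≤ K i k ∧ (-M i k) * (-M k i) = 4 * Real.cos (π / (K i k : ℝ)) ^ 2
      ∧ 0 ≤ -M i k ∧ 0 ≤ -M k i ∧ ((-M i k = 0) ↔ (-M k i = 0)) := by
  have hp : 0 ≤ -M i k := by linarith [hMK.2.1 i k hik]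
  have hq : 0 ≤ -M k i := by linarith [hMK.2.1 k i (Ne.symm hik)]
  have hp0 : -M i k = 0 ↔ -M k i = 0 := by
    rw [neg_eq_zero, neg_eq_zero]; exact hMK.2.2.1 i k
  rcases hMK.2.2.2 i k hik with ⟨hK0', _⟩ | ⟨hK2, heq⟩
  · exact absurd hK0' hK0
  · exact ⟨hK2, by rw [neg_mul_neg]; exact heq, hp, hq, hp0⟩

lemma range_reduced {w u : W} {i k : Fin n} {t : ℕ}
    (hcw : w = u * π (alternatingWord i k t)) (hl : ℓ w = ℓ u + t) :
    K i k = 0 ∨ t ≤ K i k := by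
  by_cases hK0 : K i k = 0
  · exact Or.inl hK0
  right
  have hred : ℓ (π (alternatingWord i k t)) = t := by
    have h1 : ℓ w ≤ ℓ u + ℓ (π (alternatingWord i k t)) := by
      rw [hcw]; exact cs.length_mul_le _ _
    have h2 := cs.length_wordProd_le (alternatingWord i k t)
    rw [length_alternatingWord] at h2
    omega
  by_contra hgt
  push_neg at hgt
  exact cs.not_isReduced_alternatingWord i k hK0 hgt
    (by rw [CoxeterSystem.IsReduced, length_alternatingWord]; exact hred)


include hρ hMK in
lemma rho_single_self (i : Fin n) :
    ρ (cs.simple i) (Pi.single i 1) = -(Pi.single i 1 : Fin n → ℝ) := by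
  rw [OAGeo.rho_single M K cs ρ hρ i i, hMK.1 i]
  ext z
  simp only [Pi.sub_apply, Pi.smul_apply, Pi.neg_apply, smul_eq_mul]
  ring

include hMK in
lemma fg_edge_boundary (i k : Fin n) (hik : i ≠ k) (hK0 : K i k ≠ 0) :
    (fgp (-M i k) (-M k i) (K i k)).1 ≤ 0 ∧ (fgp (-M i k) (-M k i) (K i k)).2 ≤ 0 := by
  obtain ⟨hK2, hpq, hp, hq, hp0⟩ := edge_data hMK hik hK0
  rcases Nat.even_or_odd (K i k) with he | ho
  · obtain ⟨h1, h2⟩ := boundary_even hK2 hpq hp hq hp0 he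
    rw [h1, h2]
    norm_num
  · obtain ⟨h1, h2⟩ := boundary_odd_full hK2 hpq hp hq hp0 ho
    have hm3 : 3 ≤ K i k := by
      rcases ho with ⟨j, hj⟩
      omega
    have hcos := cos_theta_pos hK2 hm3
    refine ⟨le_of_eq h1, ?_⟩
    nlinarith [h2, hq, hcos]

include hρ hMK in
lemma betaVec' (i k : Fin n) (hik : i ≠ k) (t : ℕ) (ht1 : 1 ≤ t) :
    ρ (π (alternatingWord k i t)) (Pi.single i 1)
      = -((fgp (-M i k) (-M k i) (t-1)).1 • (Pi.single i 1 : Fin n → ℝ)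
          + (fgp (-M i k) (-M k i) (t-1)).2 • (Pi.single k 1 : Fin n → ℝ)) := by
  obtain ⟨t', rfl⟩ : ∃ t', t = t' + 1 := ⟨t - 1, by omega⟩
  simp only [Nat.add_sub_cancel]
  rw [alternatingWord_succ, cs.wordProd_concat, map_mul, Module.End.mul_apply,
    rho_single_self cs ρ hρ hMK i, map_neg, betaVec cs ρ hρ hMK i k hik t']

include hρ hMK in
theorem thmD : ∀ N : ℕ, ∀ w : W, ℓ w ≤ N → ∀ (i x : Fin n) (c : ℝ), 0 < c →
    ρ w (Pi.single i 1) = c • (Pi.single x 1 : Fin n → ℝ) →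
    ∃ l : List (Fin n), List.Chain (OAStep K) i l ∧
      (i :: l).getLast (List.cons_ne_nil _ _) = x ∧ prodOA M K i l = c := by
  intro N
  induction N with
  | zero =>
    intro w hw i x c hc hv
    have hw1 : w = 1 := cs.length_eq_zero_iff.mp (Nat.le_zero.mp hw)
    subst hw1
    rw [map_one, Module.End.one_apply] at hv
    have hxi : x = i := by
      by_contra hxi
      have := congrFun hv i
      simp [Pi.single_apply, Ne.symm hxi] at this
    subst hxi
    have hc1 : c = 1 := by
      have := congrFun hv x
      simp at this
      linarith
    exact ⟨[], List.Chain.nil, rfl, by rw [prodOA, hc1]⟩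
  | succ N ih =>
    intro w hw i x c hc hv
    by_cases hw1 : w = 1
    · subst hw1
      exact ih 1 (by simp) i x c hc hv
    obtain ⟨k, hdk⟩ := cs.exists_rightDescent_of_ne_one hw1
    by_cases hki : k = i
    · exfalso
      subst hki
      have hne := neg_of_descent cs ρ hρ hMK w k hdk x
      rw [hv] at hne
      simp only [Pi.smul_apply, Pi.single_eq_same, smul_eq_mul, mul_one] at hne
      linarith
    have hik : i ≠ k := fun h => hki h.symm
    obtain ⟨u, t, hl, hui, huk, hcase⟩ := strip cs (N+1) w hw i k hik
    have ht1 : 1 ≤ t := by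
      rcases Nat.eq_zero_or_pos t with rfl | h
      · exfalso
        have hu : w = u := by
          rcases hcase with h | h <;> simpa [alternatingWord] using h
        rw [hu] at hdk
        exact huk hdk
      · exact h
    have hlu : ℓ u ≤ N := by omega
    have hPi := fun y => pos_aux cs ρ hρ hMK (ℓ u) u le_rfl i hui y
    have hPk := fun y => pos_aux cs ρ hρ hMK (ℓ u) u le_rfl k huk y
    rcases hcase with hcw | hcw
    · -- w = u * π (alternatingWord i k t)
      have hrange := range_reduced cs hcw hl
      have hEq : (fgp (-M i k) (-M k i) t).1 • ρ u (Pi.single i 1)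
          + (fgp (-M i k) (-M k i) t).2 • ρ u (Pi.single k 1)
          = c • (Pi.single x 1 : Fin n → ℝ) := by
        rw [← hv, hcw, map_mul, Module.End.mul_apply, betaVec cs ρ hρ hMK i k hik t,
          map_add, map_smul, map_smul]
      by_cases hKt : K i k ≠ 0 ∧ t = K i k
      · exfalso
        obtain ⟨hK0, htK⟩ := hKt
        subst htK
        obtain ⟨hb1, hb2⟩ := fg_edge_boundary hMK i k hik hK0
        have hx := congrFun hEq x
        simp only [Pi.add_apply, Pi.smul_apply, Pi.single_eq_same, smul_eq_mul, mul_one] at hx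
        nlinarith [mul_nonneg (neg_nonneg.mpr hb1) (hPi x),
          mul_nonneg (neg_nonneg.mpr hb2) (hPk x), hx, hc]
      · have hrange' : K i k = 0 ∨ t + 1 ≤ K i k := by
          rcases hrange with h | h
          · exact Or.inl h
          · rcases Nat.eq_or_lt_of_le h with h' | h'
            · exact absurd ⟨fun h0 => by omega, h'⟩ hKt
            · exact Or.inr h'
        obtain ⟨hF0, hG0⟩ := fg_edge_nonneg hMK i k hik t hrange'
        by_cases hG : (fgp (-M i k) (-M k i) t).2 = 0
        · -- G = 0 : then F = 1 and recurse on i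
          have hK0 : K i k ≠ 0 := by
            intro hK0
            rcases hMK.2.2.2 i k hik with ⟨_, hge⟩ | ⟨hK2, _⟩
            · have hp : 0 ≤ -M i k := by linarith [hMK.2.1 i k hik]
              have hq : 0 ≤ -M k i := by linarith [hMK.2.1 k i (Ne.symm hik)]
              have hpq4 : 4 ≤ (-M i k) * (-M k i) := by rw [neg_mul_neg]; exact hge
              obtain ⟨_, _, hgpos⟩ := fg_inf hpq4 hp hq t
              exact absurd hG (ne_of_gt (hgpos ht1))
            · omega
          obtain ⟨hK2, hpq, hp, hq, hp0⟩ := edge_data hMK hik hK0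
          have hF1 : (fgp (-M i k) (-M k i) t).1 = 1 :=
            g_zero_imp hK2 hpq hp hq hp0 t ht1 (by omega) hG
          have hvi : ρ u (Pi.single i 1) = c • (Pi.single x 1 : Fin n → ℝ) := by
            rw [← hEq, hF1, hG]
            ext y
            simp only [Pi.add_apply, Pi.smul_apply, smul_eq_mul]
            ring
          exact ih u hlu i x c hc hvi
        · have hGpos : 0 < (fgp (-M i k) (-M k i) t).2 := lt_of_le_of_ne hG0 (Ne.symm hG)
          by_cases hF : (fgp (-M i k) (-M k i) t).1 = 0
          · -- odd edge step
            have hK0 : K i k ≠ 0 := by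
              intro hK0
              rcases hMK.2.2.2 i k hik with ⟨_, hge⟩ | ⟨hK2, _⟩
              · have hp : 0 ≤ -M i k := by linarith [hMK.2.1 i k hik]
                have hq : 0 ≤ -M k i := by linarith [hMK.2.1 k i (Ne.symm hik)]
                have hpq4 : 4 ≤ (-M i k) * (-M k i) := by rw [neg_mul_neg]; exact hge
                obtain ⟨h1le, _, _⟩ := fg_inf hpq4 hp hq t
                rw [hF] at h1le
                linarith
              · omega
            obtain ⟨hK2, hpq, hp, hq, hp0⟩ := edge_data hMK hik hK0
            obtain ⟨hodd, htm1, hGq⟩ :=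
              f_zero_imp hK2 hpq hp hq hp0 t ht1 (by omega) hF
            have hm3 : 3 ≤ K i k := by
              rcases hodd with ⟨j, hj⟩
              omega
            have hcos := cos_theta_pos hK2 hm3
            have hKcoef : Kcoef M K i k = (fgp (-M i k) (-M k i) t).2 := by
              rw [Kcoef, div_eq_iff (by positivity)]
              linarith [hGq]
            have hvk : ρ u (Pi.single k 1)
                = (c / (fgp (-M i k) (-M k i) t).2) • (Pi.single x 1 : Fin n → ℝ) := by
              ext y
              have hy := congrFun hEq y
              simp only [Pi.add_apply, Pi.smul_apply, smul_eq_mul, hF, zero_mul,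
                zero_add] at hy
              simp only [Pi.smul_apply, smul_eq_mul]
              rw [div_mul_eq_mul_div, ← hy]
              field_simp
            obtain ⟨l', hch, hlast, hprod⟩ :=
              ih u hlu k x (c / (fgp (-M i k) (-M k i) t).2) (div_pos hc hGpos) hvk
            refine ⟨k :: l', List.Chain.cons ⟨hik, hodd⟩ hch, ?_, ?_⟩
            · rw [List.getLast_cons (List.cons_ne_nil _ _)]
              exact hlast
            · show Kcoef M K i k * prodOA M K k l' = c
              rw [hprod, hKcoef]
              field_simp
          · -- both positive : impossible
            exfalso
            have hFpos : 0 < (fgp (-M i k) (-M k i) t).1 := lt_of_le_of_ne hF0 (Ne.symm hF)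
            have hzero : ∀ y, y ≠ x → ρ u (Pi.single i 1) y = 0 ∧ ρ u (Pi.single k 1) y = 0 := by
              intro y hy
              have hyx := congrFun hEq y
              simp only [Pi.add_apply, Pi.smul_apply, Pi.single_apply, smul_eq_mul,
                if_neg (by exact hy), mul_zero] at hyx
              constructor <;> nlinarith [hPi y, hPk y, hyx]
            have hPieq : ρ u (Pi.single i 1)
                = (ρ u (Pi.single i 1) x) • (Pi.single x 1 : Fin n → ℝ) := by
              ext y
              by_cases hy : y = x
              · subst hy; simp
              · rw [(hzero y hy).1]
                simp [Pi.single_apply, hy]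
            have hPkeq : ρ u (Pi.single k 1)
                = (ρ u (Pi.single k 1) x) • (Pi.single x 1 : Fin n → ℝ) := by
              ext y
              by_cases hy : y = x
              · subst hy; simp
              · rw [(hzero y hy).2]
                simp [Pi.single_apply, hy]
            set a := ρ u (Pi.single i 1) x with ha
            set b := ρ u (Pi.single k 1) x with hb
            have hker : ρ u (b • (Pi.single i 1 : Fin n → ℝ) - a • (Pi.single k 1 : Fin n → ℝ))
                = ρ u 0 := by
              rw [map_sub, map_smul, map_smul, hPieq, hPkeq, map_zero]
              ext y
              simp only [Pi.sub_apply, Pi.smul_apply, smul_eq_mul, Pi.zero_apply]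
              ring
            have hker2 := rho_injective ρ u hker
            have hbz : b = 0 := by
              have := congrFun hker2 i
              simpa [Pi.single_apply, hik, Ne.symm hik] using this
            have haz : a = 0 := by
              have := congrFun hker2 k
              simp [Pi.single_apply, hik, Ne.symm hik] at this
              linarith
            have hx := congrFun hEq x
            simp only [Pi.add_apply, Pi.smul_apply, Pi.single_eq_same, smul_eq_mul,
              mul_one, ← ha, ← hb, haz, hbz, mul_zero] at hx
            linarith
    · -- w = u * π (alternatingWord k i t) : sign contradiction
      exfalso
      have hrange : K i k = 0 ∨ t ≤ K i k := by
        have h := range_reduced cs hcw hl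
        rwa [K.symmetric k i] at h
      have hEq : -((fgp (-M i k) (-M k i) (t-1)).1 • ρ u (Pi.single i 1)
          + (fgp (-M i k) (-M k i) (t-1)).2 • ρ u (Pi.single k 1))
          = c • (Pi.single x 1 : Fin n → ℝ) := by
        rw [← hv, hcw, map_mul, Module.End.mul_apply, betaVec' cs ρ hρ hMK i k hik t ht1,
          map_neg, map_add, map_smul, map_smul]
      obtain ⟨hF0, hG0⟩ := fg_edge_nonneg hMK i k hik (t-1) (by omega)
      have hx := congrFun hEq x
      simp only [Pi.neg_apply, Pi.add_apply, Pi.smul_apply, Pi.single_eq_same,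
        smul_eq_mul, mul_one] at hx
      nlinarith [mul_nonneg hF0 (hPi x), mul_nonneg hG0 (hPk x), hx, hc]

end ThmD

section Graph
open CoxeterSystem OAAux OAAux2

variable {n : ℕ} {W : Type*} [Group W]
  {M : Matrix (Fin n) (Fin n) ℝ} {K : CoxeterMatrix (Fin n)}
  (cs : CoxeterSystem K W)
  (ρ : W →* Module.End ℝ (Fin n → ℝ))
  (hρ : ∀ i, ρ (cs.simple i) = reflLin M i)
  (hMK : IsEGCM M K)

lemma OAStep_symm {i k : Fin n} (h : OAStep K i k) : OAStep K k i :=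
  ⟨h.1.symm, by rw [K.symmetric k i]; exact h.2⟩

lemma prodOA_nil (i : Fin n) : prodOA M K i [] = 1 := rfl

lemma prodOA_cons (i j : Fin n) (l : List (Fin n)) :
    prodOA M K i (j :: l) = Kcoef M K i j * prodOA M K j l := rfl

lemma getLast_cons_cons (i k : Fin n) (l : List (Fin n)) :
    (i :: k :: l).getLast (List.cons_ne_nil _ _) = (k :: l).getLast (List.cons_ne_nil _ _) :=
  List.getLast_cons _

lemma gl (i : Fin n) (l : List (Fin n)) :
    (i :: l).getLast (List.cons_ne_nil _ _) = l.getLastD i := by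
  induction l generalizing i with
  | nil => rfl
  | cons k l ih => rw [getLast_cons_cons, ih, List.getLastD_cons]

lemma getLastD_append' (l₁ l₂ : List (Fin n)) (i : Fin n) :
    (l₁ ++ l₂).getLastD i = l₂.getLastD (l₁.getLastD i) := by
  induction l₁ generalizing i with
  | nil => rfl
  | cons k l ih => rw [List.cons_append, List.getLastD_cons, ih, List.getLastD_cons]

include hMK in
lemma odd_edge_data {i k : Fin n} (h : OAStep K i k) :
    2 ≤ K i k ∧ 3 ≤ K i k ∧ 0 < Real.cos (π / (K i k : ℝ)) ∧ 0 < -M i k ∧ 0 < -M k i ∧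
    (-M i k) * (-M k i) = 4 * Real.cos (π / (K i k : ℝ))^2 ∧ Odd (K i k) := by
  obtain ⟨hik, hodd⟩ := h
  have hK0 : K i k ≠ 0 := by rcases hodd with ⟨j, hj⟩; omega
  obtain ⟨hK2, hpq, hp, hq, hp0⟩ := edge_data hMK hik hK0
  have hm3 : 3 ≤ K i k := by rcases hodd with ⟨j, hj⟩; omega
  have hcos := cos_theta_pos hK2 hm3
  have hq' : 0 < -M k i := by
    rcases eq_or_lt_of_le hq with h0 | h0
    · exfalso
      have hpz : -M i k = 0 := hp0.mpr h0.symm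
      rw [hpz, ← h0] at hpq
      nlinarith
    · exact h0
  have hp' : 0 < -M i k := by
    rcases eq_or_lt_of_le hp with h0 | h0
    · exfalso
      have hqz : -M k i = 0 := hp0.mp h0.symm
      rw [hqz, ← h0] at hpq
      nlinarith
    · exact h0
  exact ⟨hK2, hm3, hcos, hp', hq', hpq, hodd⟩

include hMK in
lemma Kcoef_pos {i k : Fin n} (h : OAStep K i k) : 0 < Kcoef M K i k := by
  obtain ⟨_, _, hcos, _, hq, _, _⟩ := odd_edge_data hMK h
  exact div_pos hq (by positivity)

include hMK in
lemma Kcoef_mul {i k : Fin n} (h : OAStep K i k) :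
    Kcoef M K i k * Kcoef M K k i = 1 := by
  obtain ⟨_, _, hcos, hp, hq, hpq, _⟩ := odd_edge_data hMK h
  rw [Kcoef, Kcoef, K.symmetric k i]
  rw [div_mul_div_comm]
  rw [div_eq_one_iff_eq (by positivity)]
  nlinarith [hpq]

include hρ hMK in
lemma step_w {i k : Fin n} (h : OAStep K i k) :
    ρ (cs.wordProd (alternatingWord i k (K i k - 1))) (Pi.single i 1)
      = Kcoef M K i k • (Pi.single k 1 : Fin n → ℝ) := by
  obtain ⟨hK2, hm3, hcos, hp', hq', hpq, hodd⟩ := odd_edge_data hMK h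
  obtain ⟨hf, hg⟩ := boundary_odd hK2 hpq (le_of_lt hp') (le_of_lt hq')
    (by constructor <;> (intro h0; exfalso; first | exact absurd h0 (ne_of_gt hp') | exact absurd h0 (ne_of_gt hq'))) hodd
  rw [betaVec cs ρ hρ hMK i k h.1 (K i k - 1), hf]
  have hKco : Kcoef M K i k = (fgp (-M i k) (-M k i) (K i k - 1)).2 := by
    rw [Kcoef, div_eq_iff (by positivity)]
    linarith [hg]
  rw [hKco]
  ext y
  simp only [Pi.add_apply, Pi.smul_apply, smul_eq_mul]
  ring

include hρ hMK in
lemma chain_w : ∀ (l : List (Fin n)) (i : Fin n), List.Chain (OAStep K) i l →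
    ∃ w : W, ρ w (Pi.single i 1)
      = prodOA M K i l • (Pi.single ((i :: l).getLast (List.cons_ne_nil _ _)) 1 : Fin n → ℝ) := by
  intro l
  induction l with
  | nil =>
    intro i _
    refine ⟨1, ?_⟩
    rw [map_one]
    exact (one_smul ℝ _).symm
  | cons k l ih =>
    intro i hch
    rw [List.Chain, List.chain_cons] at hch
    obtain ⟨w2, hw2⟩ := ih k hch.2
    refine ⟨w2 * cs.wordProd (alternatingWord i k (K i k - 1)), ?_⟩
    rw [map_mul, Module.End.mul_apply, step_w cs ρ hρ hMK hch.1, map_smul, hw2,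
      getLast_cons_cons, prodOA_cons, smul_smul]

include hMK in
lemma prodOA_pos : ∀ (l : List (Fin n)) (i : Fin n), List.Chain (OAStep K) i l →
    0 < prodOA M K i l := by
  intro l
  induction l with
  | nil => intro i _; rw [prodOA_nil]; norm_num
  | cons k l ih =>
    intro i hch
    rw [List.Chain, List.chain_cons] at hch
    rw [prodOA_cons]
    exact mul_pos (Kcoef_pos hMK hch.1) (ih k hch.2)

lemma chain_append : ∀ (l₁ l₂ : List (Fin n)) (i : Fin n),
    List.Chain (OAStep K) i l₁ →
    List.Chain (OAStep K) ((i :: l₁).getLast (List.cons_ne_nil _ _)) l₂ →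
    List.Chain (OAStep K) i (l₁ ++ l₂) := by
  intro l₁
  induction l₁ with
  | nil => intro l₂ i _ h; exact h
  | cons k l ih =>
    intro l₂ i h1 h2
    rw [List.Chain, List.chain_cons] at h1
    rw [List.cons_append, List.Chain, List.chain_cons]
    refine ⟨h1.1, ih l₂ k h1.2 ?_⟩
    rwa [getLast_cons_cons] at h2

lemma getLast_app (i : Fin n) (l₁ l₂ : List (Fin n)) :
    (i :: (l₁ ++ l₂)).getLast (List.cons_ne_nil _ _)
      = (((i :: l₁).getLast (List.cons_ne_nil _ _)) :: l₂).getLast (List.cons_ne_nil _ _) := by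
  rw [gl, gl, gl, getLastD_append']

lemma prodOA_append : ∀ (l₁ l₂ : List (Fin n)) (i : Fin n),
    prodOA M K i (l₁ ++ l₂)
      = prodOA M K i l₁ * prodOA M K ((i :: l₁).getLast (List.cons_ne_nil _ _)) l₂ := by
  intro l₁
  induction l₁ with
  | nil => intro l₂ i; rw [prodOA_nil]; simp
  | cons k l ih =>
    intro l₂ i
    rw [List.cons_append, prodOA_cons, ih l₂ k, getLast_cons_cons, prodOA_cons]
    ring

include hMK in
lemma rev_chain : ∀ (l : List (Fin n)) (i : Fin n), List.Chain (OAStep K) i l →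
    ∃ l' : List (Fin n),
      List.Chain (OAStep K) ((i :: l).getLast (List.cons_ne_nil _ _)) l' ∧
      ((((i :: l).getLast (List.cons_ne_nil _ _))) :: l').getLast (List.cons_ne_nil _ _) = i ∧
      prodOA M K ((i :: l).getLast (List.cons_ne_nil _ _)) l' * prodOA M K i l = 1 := by
  intro l
  induction l with
  | nil =>
    intro i _
    exact ⟨[], List.Chain.nil, rfl, one_mul 1⟩
  | cons k l ih =>
    intro i hch
    rw [List.Chain, List.chain_cons] at hch
    obtain ⟨l'', hch'', hlast'', hprod''⟩ := ih k hch.2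
    have hz : (i :: k :: l).getLast (List.cons_ne_nil _ _)
        = (k :: l).getLast (List.cons_ne_nil _ _) := getLast_cons_cons i k l
    refine ⟨l'' ++ [i], ?_, ?_, ?_⟩
    · rw [hz]
      apply chain_append l'' [i] _ hch''
      rw [hlast'']
      exact List.Chain.cons (OAStep_symm hch.1) List.Chain.nil
    · rw [hz, gl, List.getLastD_concat]
    · rw [hz, prodOA_append l'' [i], hlast'']
      have he : prodOA M K k [i] = Kcoef M K k i := by
        rw [prodOA_cons, prodOA_nil, mul_one]
      rw [he, prodOA_cons]
      have h1 := Kcoef_mul hMK hch.1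
      nlinarith [hprod'', h1]

include hρ hMK in
lemma conn_w {x y : Fin n} (h : OAConn K x y) :
    ∃ (w : W) (d : ℝ), 0 < d ∧ ρ w (Pi.single x 1) = d • (Pi.single y 1 : Fin n → ℝ) := by
  induction h with
  | refl => exact ⟨1, 1, by norm_num, by simp⟩
  | @tail b z hab hbc ih =>
    obtain ⟨w, d, hd, hw⟩ := ih
    refine ⟨cs.wordProd (alternatingWord b z (K b z - 1)) * w,
      d * Kcoef M K b z, mul_pos hd (Kcoef_pos hMK hbc), ?_⟩
    rw [map_mul, Module.End.mul_apply, hw, map_smul, step_w cs ρ hρ hMK hbc, smul_smul]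

lemma chain_conn : ∀ (l : List (Fin n)) (i : Fin n), List.Chain (OAStep K) i l →
    OAConn K i ((i :: l).getLast (List.cons_ne_nil _ _)) := by
  intro l
  induction l with
  | nil => intro i _; exact Relation.ReflTransGen.refl
  | cons k l ih =>
    intro i hch
    rw [List.Chain, List.chain_cons] at hch
    rw [List.getLast_cons (List.cons_ne_nil _ _)]
    exact Relation.ReflTransGen.head hch.1 (ih k hch.2)

lemma conn_symm {x y : Fin n} (h : OAConn K x y) : OAConn K y x :=
  by
    induction h with
    | refl => exact Relation.ReflTransGen.refl
    | tail _ hs ih => exact Relation.ReflTransGen.head (OAStep_symm hs) ih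

end Graph

section Main
open CoxeterSystem OAAux OAAux2

variable {n : ℕ} {W : Type*} [Group W]
  {M : Matrix (Fin n) (Fin n) ℝ} {K : CoxeterMatrix (Fin n)}
  (cs : CoxeterSystem K W)
  (ρ : W →* Module.End ℝ (Fin n → ℝ))
  (hρ : ∀ i, ρ (cs.simple i) = reflLin M i)
  (hMK : IsEGCM M K)

lemma rho_cancel' (u : W) (v : Fin n → ℝ) : ρ u (ρ u⁻¹ v) = v := by
  have := rho_cancel ρ u⁻¹ v
  rwa [inv_inv] at this

lemma root_coeff {x : Fin n} {v : Fin n → ℝ} (hv : v ∈ PhiPlus ρ ∩ multA x) :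
    ∃ c : ℝ, 0 < c ∧ v = c • (Pi.single x 1 : Fin n → ℝ) := by
  obtain ⟨⟨hPhi, hpos⟩, c, rfl⟩ := hv
  refine ⟨c, ?_, rfl⟩
  have hc0 : 0 ≤ c := by
    have := hpos x
    simpa using this
  rcases eq_or_lt_of_le hc0 with rfl | h
  · exfalso
    obtain ⟨w, j, hw⟩ := hPhi
    have h0 : ρ w (Pi.single j 1) = (0 : Fin n → ℝ) := by
      rw [← hw]
      ext y
      simp
    have := congrArg (ρ w⁻¹) h0
    rw [rho_cancel ρ w, map_zero] at this
    have := congrFun this j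
    simp at this
  · exact h

include hρ in
lemma image_A {x y : Fin n} (w : W) (d : ℝ) (hd : 0 < d)
    (hw : ρ w (Pi.single x 1) = d • (Pi.single y 1 : Fin n → ℝ)) :
    (ρ w) '' (PhiPlus ρ ∩ multA x) = PhiPlus ρ ∩ multA y := by
  ext u
  constructor
  · rintro ⟨v, hv, rfl⟩
    obtain ⟨c, hc, hveq⟩ := root_coeff ρ hv
    obtain ⟨⟨⟨w', j, hwj⟩, _⟩, _⟩ := hv
    have himg : ρ w v = (c * d) • (Pi.single y 1 : Fin n → ℝ) := by
      rw [hveq, map_smul, hw, smul_smul]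
    refine ⟨⟨⟨w * w', j, ?_⟩, ?_⟩, c * d, himg⟩
    · rw [map_mul, Module.End.mul_apply, ← hwj]
    · intro jj
      rw [himg]
      have : (0:ℝ) ≤ c * d := le_of_lt (mul_pos hc hd)
      simp only [Pi.smul_apply, smul_eq_mul, Pi.single_apply]
      positivity
  · intro hu
    obtain ⟨c, hc, hueq⟩ := root_coeff ρ hu
    obtain ⟨⟨⟨w', j, hwj⟩, _⟩, _⟩ := hu
    refine ⟨ρ w⁻¹ u, ?_, rho_cancel' ρ w u⟩
    have hinv : ρ w⁻¹ (Pi.single y 1) = d⁻¹ • (Pi.single x 1 : Fin n → ℝ) := by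
      have h1 := congrArg (ρ w⁻¹) hw
      rw [rho_cancel ρ w, map_smul] at h1
      have h2 := congrArg (fun z => d⁻¹ • z) h1
      rw [smul_smul, inv_mul_cancel₀ (ne_of_gt hd), one_smul] at h2
      exact h2.symm ▸ (by rw [← h2]) 
    have hval : ρ w⁻¹ u = (c * d⁻¹) • (Pi.single x 1 : Fin n → ℝ) := by
      rw [hueq, map_smul, hinv, smul_smul]
    refine ⟨⟨⟨w⁻¹ * w', j, ?_⟩, ?_⟩, c * d⁻¹, hval⟩
    · rw [map_mul, Module.End.mul_apply, ← hwj]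
    · intro jj
      rw [hval]
      have hcd : (0:ℝ) ≤ c * d⁻¹ := le_of_lt (mul_pos hc (inv_pos.mpr hd))
      simp only [Pi.smul_apply, smul_eq_mul, Pi.single_apply]
      positivity

include hρ hMK in
lemma transfer {x y : Fin n} (h : OAConn K x y) :
    ((PhiPlus ρ ∩ multA x).Finite → (PhiPlus ρ ∩ multA y).Finite) ∧
    (PhiPlus ρ ∩ multA x).ncard = (PhiPlus ρ ∩ multA y).ncard := by
  obtain ⟨w, d, hd, hw⟩ := conn_w cs ρ hρ hMK h
  have himg := image_A cs ρ hρ w d hd hw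
  constructor
  · intro hfin
    rw [← himg]
    exact hfin.image _
  · rw [← himg]
    exact (Set.ncard_image_of_injective _ (rho_injective ρ w)).symm

include hρ hMK in
lemma finite_of_unital {x₀ : Fin n}
    (H1 : ∀ (i : Fin n) (l : List (Fin n)), OAConn K x₀ i → List.Chain (OAStep K) i l →
      (i :: l).getLast (List.cons_ne_nil _ _) = i → prodOA M K i l = 1)
    (x : Fin n) (hx : OAConn K x₀ x) : (PhiPlus ρ ∩ multA x).Finite := by
  classical
  -- injection into Fin n
  have key : ∀ v ∈ PhiPlus ρ ∩ multA x, ∃ (j : Fin n) (c : ℝ), 0 < c ∧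
      v = c • (Pi.single x 1 : Fin n → ℝ) ∧
      ∃ l : List (Fin n), List.Chain (OAStep K) j l ∧
        (j :: l).getLast (List.cons_ne_nil _ _) = x ∧ prodOA M K j l = c := by
    intro v hv
    obtain ⟨c, hc, hveq⟩ := root_coeff ρ hv
    obtain ⟨⟨⟨w, j, hwj⟩, _⟩, _⟩ := hv
    obtain ⟨l, hch, hlast, hprod⟩ := thmD cs ρ hρ hMK (cs.length w) w le_rfl j x c hc
      (by rw [← hwj, ← hveq])
    exact ⟨j, c, hc, hveq, l, hch, hlast, hprod⟩
  -- c is determined by j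
  have uniq : ∀ (j : Fin n) (c c' : ℝ),
      (∃ l, List.Chain (OAStep K) j l ∧ (j :: l).getLast (List.cons_ne_nil _ _) = x ∧
        prodOA M K j l = c) →
      (∃ l, List.Chain (OAStep K) j l ∧ (j :: l).getLast (List.cons_ne_nil _ _) = x ∧
        prodOA M K j l = c') → c = c' := by
    intro j c c' ⟨l, hch, hlast, hprod⟩ ⟨l', hch', hlast', hprod'⟩
    obtain ⟨l'', hch'', hlast'', hprod''⟩ := rev_chain hMK l' j hch'
    rw [hlast'] at hch'' hlast'' hprod''
    -- hch'' : Chain x l'', hlast'' : (x::l'').getLast = j, hprod'' : prodOA x l'' * c' = 1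
    have hconnj : OAConn K x₀ j := by
      refine Relation.ReflTransGen.trans hx ?_
      have := chain_conn l'' x hch''
      rwa [hlast''] at this
    have hcomb : List.Chain (OAStep K) j (l ++ l'') := by
      apply chain_append l l'' j hch
      rw [hlast]
      exact hch''
    have hlastc : ((j :: (l ++ l'')).getLast (List.cons_ne_nil _ _)) = j := by
      rw [getLast_app, hlast, hlast'']
    have hprodc : prodOA M K j (l ++ l'') = c * prodOA M K x l'' := by
      rw [prodOA_append, hlast, hprod]
    have hone := H1 j (l ++ l'') hconnj hcomb hlastc
    rw [hprodc] at hone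
    rw [hprod'] at hprod''
    have hcpos : 0 < c := by
      rw [← hprod]; exact prodOA_pos hMK l j hch
    have hc'pos : 0 < c' := by
      rw [← hprod']; exact prodOA_pos hMK l' j hch'
    have hxpos : 0 < prodOA M K x l'' := prodOA_pos hMK l'' x hch''
    nlinarith [hone, hprod'']
  -- build injection
  set A := PhiPlus ρ ∩ multA x with hA
  have hinj : ∃ f : A → Fin n, Function.Injective f := by
    refine ⟨fun v => (key v.1 v.2).choose, ?_⟩
    intro v v' hf
    obtain ⟨c, hc, hveq, hl⟩ := (key v.1 v.2).choose_spec
    obtain ⟨c', hc', hveq', hl'⟩ := (key v'.1 v'.2).choose_spec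
    have hf' : (key v.1 v.2).choose = (key v'.1 v'.2).choose := hf
    rw [hf'] at hl
    have := uniq _ c c' hl hl'
    apply Subtype.ext
    rw [hveq, hveq', this]
  obtain ⟨f, hfinj⟩ := hinj
  haveI : Finite A := Finite.of_injective f hfinj
  exact Set.finite_coe_iff.mp this

include hρ hMK in
lemma unital_of_finite {x₀ : Fin n} (x : Fin n) (hx : OAConn K x₀ x)
    (hfin : (PhiPlus ρ ∩ multA x).Finite) :
    ∀ (i : Fin n) (l : List (Fin n)), OAConn K x₀ i → List.Chain (OAStep K) i l →
      (i :: l).getLast (List.cons_ne_nil _ _) = i → prodOA M K i l = 1 := by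
  intro i l hconn hch hlast
  by_contra hne
  set P := prodOA M K i l with hP
  have hPpos : 0 < P := prodOA_pos hMK l i hch
  obtain ⟨w, hw⟩ := chain_w cs ρ hρ hMK l i hch
  rw [hlast] at hw
  -- hw : ρ w (single i 1) = P • single i 1
  have hpow : ∀ r : ℕ, ρ (w ^ r) (Pi.single i 1) = (P ^ r) • (Pi.single i 1 : Fin n → ℝ) := by
    intro r
    induction r with
    | zero => rw [pow_zero, pow_zero, map_one, Module.End.one_apply, one_smul]
    | succ r ih =>
      rw [pow_succ', map_mul, Module.End.mul_apply, ih, map_smul, hw, smul_smul, ← pow_succ]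
  have hmem : ∀ r : ℕ, (P ^ r) • (Pi.single i 1 : Fin n → ℝ) ∈ PhiPlus ρ ∩ multA i := by
    intro r
    refine ⟨⟨⟨w ^ r, i, (hpow r).symm⟩, ?_⟩, P ^ r, rfl⟩
    intro jj
    have : (0:ℝ) ≤ P ^ r := le_of_lt (pow_pos hPpos r)
    simp only [Pi.smul_apply, smul_eq_mul, Pi.single_apply]
    positivity
  have hpinj : Function.Injective (fun r : ℕ => P ^ r) := by
    rcases lt_trichotomy P 1 with h1 | h1 | h1
    · intro a b hab
      by_contra hne'
      rcases Nat.lt_or_ge a b with hlt | hge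
      · have := pow_lt_pow_right_of_lt_one₀ hPpos h1 hlt
        simp only at hab
        linarith [hab ▸ this]
      · have hlt : b < a := by omega
        have := pow_lt_pow_right_of_lt_one₀ hPpos h1 hlt
        simp only at hab
        linarith [hab ▸ this]
    · exact absurd h1 hne
    · intro a b hab
      by_contra hne'
      rcases Nat.lt_or_ge a b with hlt | hge
      · have := pow_lt_pow_right₀ h1 hlt
        simp only at hab
        linarith [hab ▸ this]
      · have hlt : b < a := by omega
        have := pow_lt_pow_right₀ h1 hlt
        simp only at hab
        linarith [hab ▸ this]
  have hinf : (PhiPlus ρ ∩ multA i).Infinite := by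
    refine Set.infinite_of_injective_forall_mem
      (f := fun r : ℕ => (P ^ r) • (Pi.single i 1 : Fin n → ℝ)) ?_ hmem
    intro a b hab
    have := congrFun hab i
    simp only [Pi.smul_apply, Pi.single_eq_same, smul_eq_mul, mul_one] at this
    exact hpinj this
  have hconnxi : OAConn K x i := Relation.ReflTransGen.trans (conn_symm hx) hconn
  exact hinf ((transfer cs ρ hρ hMK hconnxi).1 hfin)

end Main


end OAProof

/-- For the OA-connected component `J = {y | OAConn K x₀ y}` of a node `x₀` in an E-GCM
graph, the following are equivalent: (1) the component is unital OA-cyclic; (2) the set of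
positive roots that are scalar multiples of `α_x` is finite for some `x ∈ J`; (3) it is
finite for all `x ∈ J`. Moreover, in that case these sets have the same cardinality for
all `x, y ∈ J`. -/
theorem component_unital_iff_finite_multiples {n : ℕ} {W : Type*} [Group W]
    (M : Matrix (Fin n) (Fin n) ℝ) (K : CoxeterMatrix (Fin n)) (hMK : IsEGCM M K)
    (cs : CoxeterSystem K W)
    (ρ : W →* Module.End ℝ (Fin n → ℝ))
    (hρ : ∀ i, ρ (cs.simple i) = reflLin M i)
    (x₀ : Fin n) :
    (((∀ (i : Fin n) (l : List (Fin n)), OAConn K x₀ i → List.Chain (OAStep K) i l →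
        (i :: l).getLast (List.cons_ne_nil _ _) = i → prodOA M K i l = 1) ↔
      (∃ x, OAConn K x₀ x ∧ (PhiPlus ρ ∩ multA x).Finite)) ∧
    ((∀ (i : Fin n) (l : List (Fin n)), OAConn K x₀ i → List.Chain (OAStep K) i l →
        (i :: l).getLast (List.cons_ne_nil _ _) = i → prodOA M K i l = 1) ↔
      (∀ x, OAConn K x₀ x → (PhiPlus ρ ∩ multA x).Finite))) ∧
    ((∀ (i : Fin n) (l : List (Fin n)), OAConn K x₀ i → List.Chain (OAStep K) i l →
        (i :: l).getLast (List.cons_ne_nil _ _) = i → prodOA M K i l = 1) →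
      ∀ x y, OAConn K x₀ x → OAConn K x₀ y →
        (PhiPlus ρ ∩ multA x).ncard = (PhiPlus ρ ∩ multA y).ncard) := by
  constructor
  · constructor
    · constructor
      · intro H1
        exact ⟨x₀, Relation.ReflTransGen.refl,
          OAProof.finite_of_unital cs ρ hρ hMK H1 x₀ Relation.ReflTransGen.refl⟩
      · rintro ⟨x, hx, hfin⟩
        exact OAProof.unital_of_finite cs ρ hρ hMK x hx hfin
    · constructor
      · intro H1 x hx
        exact OAProof.finite_of_unital cs ρ hρ hMK H1 x hx
      · intro h
        exact OAProof.unital_of_finite cs ρ hρ hMK x₀ Relation.ReflTransGen.refl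
          (h x₀ Relation.ReflTransGen.refl)
  · intro _ x y hx hy
    exact (OAProof.transfer cs ρ hρ hMK
      (Relation.ReflTransGen.trans (OAProof.conn_symm hx) hy)).2
end

section
/- Suppose the E-GCM graph (Γ,M) is unital OA-cyclic. Then for any OA-path P there is a simple OA-path Q with the same start and end nodes and the same product: Π_Q = Π_P. -/
open Real

private lemma sublist_pair_decomp {α : Type*} {x : α} :
    ∀ {l : List α}, List.Sublist [x, x] l →
      ∃ l1 l2 l3, l = l1 ++ x :: (l2 ++ x :: l3) := by
  intro l
  induction l with
  | nil => intro h; exact absurd (List.eq_nil_of_sublist_nil h) (by simp)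
  | cons a t ih =>
    intro h
    rcases List.cons_sublist_cons'.mp h with h' | ⟨rfl, h'⟩
    · obtain ⟨l1, l2, l3, rfl⟩ := ih h'
      exact ⟨a :: l1, l2, l3, rfl⟩
    · have hx : x ∈ t := List.singleton_sublist.mp h'
      obtain ⟨l2, l3, rfl⟩ := List.append_of_mem hx
      exact ⟨[], l2, l3, rfl⟩

private lemma getLast_cons_append_cons {α : Type*} :
    ∀ (l1 : List α) (a b : α) (l2 : List α),
      (a :: (l1 ++ b :: l2)).getLast (List.cons_ne_nil _ _) =
        (b :: l2).getLast (List.cons_ne_nil _ _) := by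
  intro l1
  induction l1 with
  | nil => intro a b l2; rw [List.nil_append, List.getLast_cons (List.cons_ne_nil _ _)]
  | cons c t ih =>
    intro a b l2
    rw [List.cons_append, List.getLast_cons (by simp : c :: (t ++ b :: l2) ≠ []), ih]

private lemma prodOA_append {n : ℕ} (M : Matrix (Fin n) (Fin n) ℝ) (K : CoxeterMatrix (Fin n)) :
    ∀ (l1 : List (Fin n)) (i : Fin n) (l2 : List (Fin n)),
      prodOA M K i (l1 ++ l2) =
        prodOA M K i l1 * prodOA M K ((i :: l1).getLast (List.cons_ne_nil _ _)) l2 := by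
  intro l1
  induction l1 with
  | nil => intro i l2; simp [prodOA]
  | cons j t ih =>
    intro i l2
    show prodOA M K i (j :: (t ++ l2)) = _
    rw [prodOA, prodOA, ih j l2, List.getLast_cons (List.cons_ne_nil _ _)]
    ring

/-- Product over a path of the form `l2 ++ x :: l3` from `x` splits, with the cycle part
`x … x` contributing `1` by unital OA-cyclicity. -/
private lemma prodOA_cycle_cons {n : ℕ} {M : Matrix (Fin n) (Fin n) ℝ}
    {K : CoxeterMatrix (Fin n)} (hU : UnitalOACyclic M K) {x : Fin n} {l2 l3 : List (Fin n)}
    (hc : List.Chain (OAStep K) x (l2 ++ [x])) :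
    prodOA M K x (l2 ++ x :: l3) = prodOA M K x l3 := by
  have hlast : ((x :: (l2 ++ [x]))).getLast (List.cons_ne_nil _ _) = x := by
    rw [getLast_cons_append_cons]; rfl
  have hcyc : prodOA M K x (l2 ++ [x]) = 1 := hU x (l2 ++ [x]) hc hlast
  have : l2 ++ x :: l3 = (l2 ++ [x]) ++ l3 := by simp
  rw [this, prodOA_append, hlast, hcyc, one_mul]

private lemma exists_simple_aux {n : ℕ}
    (M : Matrix (Fin n) (Fin n) ℝ) (K : CoxeterMatrix (Fin n))
    (hU : UnitalOACyclic M K) :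
    ∀ (N : ℕ) (i : Fin n) (l : List (Fin n)), l.length ≤ N →
      List.Chain (OAStep K) i l →
      ∃ l' : List (Fin n), List.Chain (OAStep K) i l' ∧
        (i :: l').dropLast.Nodup ∧ (i :: l').tail.Nodup ∧
        (i :: l').getLast (List.cons_ne_nil _ _) = (i :: l).getLast (List.cons_ne_nil _ _) ∧
        prodOA M K i l' = prodOA M K i l := by
  intro N
  induction N with
  | zero =>
    intro i l hlen h
    rw [List.length_eq_zero_iff.mp (Nat.le_zero.mp hlen)]
    exact ⟨[], List.Chain.nil, by simp, by simp, rfl, rfl⟩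
  | succ N ih =>
    intro i l hlen h
    by_cases hnd : (i :: l).Nodup
    · exact ⟨l, h, hnd.sublist (List.dropLast_sublist _), hnd.sublist (List.tail_sublist _),
        rfl, rfl⟩
    · obtain ⟨x, hx⟩ := List.exists_duplicate_iff_not_nodup.mpr hnd
      obtain ⟨l1, l2, l3, hdec⟩ := sublist_pair_decomp (List.duplicate_iff_sublist.mp hx)
      rcases l1 with _ | ⟨a, t⟩
      · -- i = x, l = l2 ++ x :: l3
        rw [List.nil_append] at hdec
        injection hdec with e1 e2
        subst e1; subst e2
        have hsplit := (List.isChain_cons_split (l₁ := l2) (l₂ := l3)).mp h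
        have hlen' : l3.length ≤ N := by
          simp only [List.length_append, List.length_cons] at hlen; omega
        obtain ⟨l', hc, h1, h2, h3, h4⟩ := ih i l3 hlen' hsplit.2
        refine ⟨l', hc, h1, h2, ?_, ?_⟩
        · rw [h3, getLast_cons_append_cons]
        · rw [h4, prodOA_cycle_cons hU hsplit.1]
      · -- i = a, l = t ++ x :: (l2 ++ x :: l3)
        rw [List.cons_append] at hdec
        injection hdec with e1 e2
        subst e1; subst e2
        have hs1 := (List.isChain_cons_split (l₁ := t) (l₂ := l2 ++ x :: l3)).mp h
        have hs2 := (List.isChain_cons_split (l₁ := l2) (l₂ := l3)).mp hs1.2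
        have hchain' : List.Chain (OAStep K) i (t ++ x :: l3) :=
          (List.isChain_cons_split (l₁ := t) (l₂ := l3)).mpr ⟨hs1.1, hs2.2⟩
        have hlen' : (t ++ x :: l3).length ≤ N := by
          simp only [List.length_append, List.length_cons] at hlen ⊢; omega
        obtain ⟨l', hc, h1, h2, h3, h4⟩ := ih i (t ++ x :: l3) hlen' hchain'
        refine ⟨l', hc, h1, h2, ?_, ?_⟩
        · rw [h3, getLast_cons_append_cons, getLast_cons_append_cons,
            getLast_cons_append_cons]
        · rw [h4]
          have e1 : t ++ x :: l3 = (t ++ [x]) ++ l3 := by simp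
          have e2 : t ++ x :: (l2 ++ x :: l3) = (t ++ [x]) ++ (l2 ++ x :: l3) := by simp
          have hlx : ((i :: (t ++ [x]))).getLast (List.cons_ne_nil _ _) = x := by
            rw [getLast_cons_append_cons]; rfl
          rw [e1, e2, prodOA_append M K (t ++ [x]) i l3,
            prodOA_append M K (t ++ [x]) i (l2 ++ x :: l3), hlx,
            prodOA_cycle_cons hU hs2.1]

/-- If the E-GCM graph is unital OA-cyclic, then every OA-path is equivalent to a simple
OA-path: one with the same start and end nodes and the same product `Π`, having no repeated
nodes except possibly equal start and end nodes. -/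
theorem exists_simple_OA_path {n : ℕ}
    (M : Matrix (Fin n) (Fin n) ℝ) (K : CoxeterMatrix (Fin n)) (hMK : IsEGCM M K)
    (hU : UnitalOACyclic M K)
    (i : Fin n) (l : List (Fin n)) (h : List.Chain (OAStep K) i l) :
    ∃ l' : List (Fin n), List.Chain (OAStep K) i l' ∧
      (i :: l').dropLast.Nodup ∧ (i :: l').tail.Nodup ∧
      (i :: l').getLast (List.cons_ne_nil _ _) = (i :: l).getLast (List.cons_ne_nil _ _) ∧
      prodOA M K i l' = prodOA M K i l := by
  exact exists_simple_aux M K hU l.length i l le_rfl h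
end
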